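/- For every r > 1 and M > 0 there exist C > 0 and M' > M such that for all t ≥ 0, all x ∈ ℝ, and all w with 0 < w < 1: ∫_{-∞}^{∞} (1+t)^{-1/2} exp(-|x-wy|²/(M(1+t))) (1+|y|)^{-r} dy ≤ C[ (1+|x|+√t)^{-r} + (1+t)^{-1/2} exp(-|x|²/(M'(1+t))) ], uniformly in w. -/

import Mathlib

open MeasureTheory Real

set_option maxHeartbeats 1000000

/-- Scaled-argument Gaussian convolution bound against algebraically decaying data,
uniform in the intermediate parameter `w ∈ (0,1)`. -/
theorem scaled_gaussian_conv_algebraic (r M : ℝ) (hr : 1 < r) (hM : 0 < M) :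
    ∃ C > (0:ℝ), ∃ M' > M, ∀ t ≥ (0:ℝ), ∀ x w : ℝ, 0 < w → w < 1 →
      (∫ y : ℝ, (1 + t) ^ (-(1:ℝ)/2) * Real.exp (-(x - w*y)^2 / (M*(1+t))) *
          (1 + |y|) ^ (-r)) ≤
        C * ((1 + |x| + Real.sqrt t) ^ (-r) +
          (1 + t) ^ (-(1:ℝ)/2) * Real.exp (-x^2 / (M'*(1+t)))) := by
  have hI : Integrable (fun y : ℝ => (1 + |y|) ^ (-r)) := by
    have h1 : ((Module.finrank ℝ ℝ : ℕ) : ℝ) < r := by simpa using hr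
    simpa [Real.norm_eq_abs] using integrable_one_add_norm (E := ℝ) (μ := volume) h1
  set I₀ := ∫ y : ℝ, (1 + |y|) ^ (-r) with hI₀def
  have hI₀ : 0 ≤ I₀ := integral_nonneg fun y => Real.rpow_nonneg (by positivity) _
  have hK : (0:ℝ) ≤ (2:ℝ) ^ r * (3:ℝ) ^ r * Real.sqrt (π * M) := by positivity
  refine ⟨(I₀ + 1) * Real.exp M⁻¹ + (2:ℝ) ^ r * (3:ℝ) ^ r * Real.sqrt (π * M) + 1,
    by positivity, 4 * M, by linarith, ?_⟩
  intro t ht x w hw0 hw1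
  have h1t : (0:ℝ) < 1 + t := by linarith
  have hP : (0:ℝ) < (1 + t) ^ (-(1:ℝ)/2) := Real.rpow_pos_of_pos h1t _
  have hT1 : (0:ℝ) ≤ (1 + |x| + Real.sqrt t) ^ (-r) :=
    Real.rpow_nonneg (by positivity) _
  have hE2pos : (0:ℝ) < Real.exp (-x^2 / (4*M*(1+t))) := Real.exp_pos _
  have hT2 : (0:ℝ) ≤ (1 + t) ^ (-(1:ℝ)/2) * Real.exp (-x^2 / (4*M*(1+t))) := by positivity
  have hexpM : (1:ℝ) ≤ Real.exp M⁻¹ := Real.one_le_exp (by positivity)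
  rcases le_or_gt (x^2) (1+t) with hx | hx
  · -- small |x| : trivial bound against the Gaussian term
    have key : (∫ y : ℝ, (1 + t) ^ (-(1:ℝ)/2) * Real.exp (-(x - w*y)^2 / (M*(1+t))) *
          (1 + |y|) ^ (-r)) ≤ (1 + t) ^ (-(1:ℝ)/2) * I₀ := by
      rw [hI₀def, ← MeasureTheory.integral_const_mul]
      refine integral_mono_of_nonneg (Filter.Eventually.of_forall fun y => by positivity)
        (hI.const_mul _) (Filter.Eventually.of_forall fun y => ?_)
      have he : Real.exp (-(x - w*y)^2 / (M*(1+t))) ≤ 1 := by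
        rw [Real.exp_le_one_iff]
        apply div_nonpos_of_nonpos_of_nonneg
        · exact neg_nonpos.2 (sq_nonneg _)
        · positivity
      have hA : (0:ℝ) ≤ (1 + |y|) ^ (-r) := Real.rpow_nonneg (by positivity) _
      calc (1 + t) ^ (-(1:ℝ)/2) * Real.exp (-(x - w*y)^2 / (M*(1+t))) * (1 + |y|) ^ (-r)
          ≤ ((1 + t) ^ (-(1:ℝ)/2) * 1) * (1 + |y|) ^ (-r) := by
            apply mul_le_mul_of_nonneg_right _ hA
            exact mul_le_mul_of_nonneg_left he hP.le
        _ = (1 + t) ^ (-(1:ℝ)/2) * (1 + |y|) ^ (-r) := by ring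
    have hle : x^2 / (4*M*(1+t)) ≤ M⁻¹ := by
      rw [div_le_iff₀ (by positivity)]
      have h4 : M⁻¹ * (4*M*(1+t)) = 4*(1+t) := by field_simp
      rw [h4]; linarith
    have hprod : (1:ℝ) ≤ Real.exp M⁻¹ * Real.exp (-x^2 / (4*M*(1+t))) := by
      rw [← Real.exp_add]
      apply Real.one_le_exp
      have hrewr : -x^2 / (4*M*(1+t)) = -(x^2 / (4*M*(1+t))) := by ring
      rw [hrewr]; linarith
    refine le_trans key ?_
    have h5 : (1 + t) ^ (-(1:ℝ)/2) * I₀ ≤ ((I₀ + 1) * Real.exp M⁻¹) *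
        ((1 + t) ^ (-(1:ℝ)/2) * Real.exp (-x^2 / (4*M*(1+t)))) := by
      nlinarith [mul_le_mul_of_nonneg_left hprod
        (mul_nonneg (by linarith : (0:ℝ) ≤ I₀ + 1) hP.le), hP.le]
    refine h5.trans ?_
    nlinarith [mul_nonneg hK hT1, mul_nonneg hK hT2, hT2, hT1,
      mul_nonneg hT1 (mul_nonneg (by linarith : (0:ℝ) ≤ I₀ + 1) (Real.exp_pos M⁻¹).le)]
  · -- large |x|
    have hx1 : 1 < |x| := by nlinarith [sq_abs x, abs_nonneg x]
    have hx0 : (0:ℝ) < |x| := by linarith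
    have hst : Real.sqrt t ≤ |x| := by
      have h2 : Real.sqrt t ≤ Real.sqrt (x^2) := Real.sqrt_le_sqrt (by nlinarith)
      rwa [Real.sqrt_sq_eq_abs] at h2
    set b' := (M*(1+t))⁻¹ with hb'def
    have hb' : (0:ℝ) < b' := by positivity
    have hMt : (M*(1+t)) ≠ 0 := by positivity
    have hexp_eq : ∀ z : ℝ, -z^2 / (M*(1+t)) = -b' * z^2 := by
      intro z; rw [hb'def, div_eq_mul_inv]; ring
    set c₁ := Real.exp (-x^2 / (4*M*(1+t))) * (1+t)^(-(1:ℝ)/2) with hc₁def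
    set c₂ := (2*w/|x|)^r * (1+t)^(-(1:ℝ)/2) with hc₂def
    have hc₁ : 0 ≤ c₁ := by positivity
    have hc₂ : 0 ≤ c₂ := mul_nonneg (Real.rpow_nonneg (by positivity) _) hP.le
    have hGint : Integrable (fun y : ℝ => Real.exp (-b' * (x - w*y)^2)) := by
      have h0 : Integrable (fun z : ℝ => Real.exp (-b' * z^2)) := integrable_exp_neg_mul_sq hb'
      have h1 : Integrable (fun u : ℝ => Real.exp (-b' * (x - u)^2)) := h0.comp_sub_left x
      exact h1.comp_mul_left' hw0.ne'
    have hgint : Integrable (fun y : ℝ =>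
        c₁ * (1 + |y|) ^ (-r) + c₂ * Real.exp (-b' * (x - w*y)^2)) :=
      (hI.const_mul c₁).add (hGint.const_mul c₂)
    -- pointwise bound
    have hfg : ∀ y : ℝ, (1 + t) ^ (-(1:ℝ)/2) * Real.exp (-(x - w*y)^2 / (M*(1+t))) *
        (1 + |y|) ^ (-r) ≤ c₁ * (1 + |y|) ^ (-r) + c₂ * Real.exp (-b' * (x - w*y)^2) := by
      intro y
      rw [hexp_eq (x - w*y)]
      have hA : (0:ℝ) ≤ (1 + |y|) ^ (-r) := Real.rpow_nonneg (by positivity) _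
      have hE : (0:ℝ) < Real.exp (-b' * (x - w*y)^2) := Real.exp_pos _
      rcases le_or_gt (|x|/2) (|x - w*y|) with h | h
      · have h2 : x^2/4 ≤ (x - w*y)^2 := by
          nlinarith [mul_self_le_mul_self (by positivity : (0:ℝ) ≤ |x|/2) h,
            sq_abs (x - w*y), sq_abs x]
        have h3 : -b' * (x - w*y)^2 ≤ -x^2 / (4*M*(1+t)) := by
          have heq : -x^2 / (4*M*(1+t)) = -b' * (x^2/4) := by
            rw [hb'def, show (4*M*(1+t)) = 4*(M*(1+t)) by ring, div_eq_mul_inv, mul_inv]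
            ring
          rw [heq]
          nlinarith [mul_le_mul_of_nonneg_left h2 hb'.le]
        have h4 : (1 + t) ^ (-(1:ℝ)/2) * Real.exp (-b' * (x - w*y)^2) * (1 + |y|) ^ (-r)
            ≤ c₁ * (1 + |y|) ^ (-r) := by
          rw [hc₁def]
          have h5 := mul_le_mul_of_nonneg_left (Real.exp_le_exp.2 h3) hP.le
          nlinarith [mul_le_mul_of_nonneg_right h5 hA]
        nlinarith [mul_nonneg hc₂ hE.le]
      · have hwy : |x|/2 < w * |y| := by
          have hxeq : x - w*y + w*y = x := by ring
          have habs : |x| ≤ |x - w*y| + |w*y| := by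
            calc |x| = |x - w*y + w*y| := by rw [hxeq]
              _ ≤ |x - w*y| + |w*y| := abs_add_le _ _
          have habs2 : |w*y| = w * |y| := by rw [abs_mul, abs_of_pos hw0]
          rw [habs2] at habs
          linarith
        have hA2 : (1 + |y|) ^ (-r) ≤ (2*w/|x|)^r := by
          have h1 : (0:ℝ) < |x|/(2*w) := by positivity
          have h2 : |x|/(2*w) ≤ 1 + |y| := by
            have hy : |x|/(2*w) < |y| := by
              rw [div_lt_iff₀ (by positivity)]
              nlinarith
            linarith
          calc (1 + |y|) ^ (-r) ≤ (|x|/(2*w)) ^ (-r) :=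
              Real.rpow_le_rpow_of_nonpos h1 h2 (by linarith)
            _ = (2*w/|x|)^r := by
                rw [Real.rpow_neg h1.le, ← Real.inv_rpow h1.le, inv_div]
        have h4 : (1 + t) ^ (-(1:ℝ)/2) * Real.exp (-b' * (x - w*y)^2) * (1 + |y|) ^ (-r)
            ≤ c₂ * Real.exp (-b' * (x - w*y)^2) := by
          rw [hc₂def]
          nlinarith [mul_le_mul_of_nonneg_left hA2 (mul_nonneg hP.le hE.le)]
        nlinarith [mul_nonneg hc₁ hA]
    have key : (∫ y : ℝ, (1 + t) ^ (-(1:ℝ)/2) * Real.exp (-(x - w*y)^2 / (M*(1+t))) *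
          (1 + |y|) ^ (-r)) ≤ c₁ * I₀ + c₂ * (w⁻¹ * Real.sqrt (π * (M*(1+t)))) := by
      have hmono := integral_mono_of_nonneg
        (Filter.Eventually.of_forall fun y : ℝ => by positivity) hgint
        (Filter.Eventually.of_forall hfg)
      refine hmono.trans_eq ?_
      rw [integral_add (hI.const_mul c₁) (hGint.const_mul c₂), MeasureTheory.integral_const_mul,
        MeasureTheory.integral_const_mul, ← hI₀def]
      congr 1
      have h1 : (∫ y : ℝ, Real.exp (-b' * (x - w*y)^2))
          = |w⁻¹| • ∫ u : ℝ, Real.exp (-b' * (x - u)^2) :=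
        MeasureTheory.Measure.integral_comp_mul_left (fun u => Real.exp (-b' * (x - u)^2)) w
      have h2 : (∫ u : ℝ, Real.exp (-b' * (x - u)^2)) = ∫ z : ℝ, Real.exp (-b' * z^2) :=
        integral_sub_left_eq_self (fun z => Real.exp (-b' * z^2)) volume x
      have h3 : (∫ z : ℝ, Real.exp (-b' * z^2)) = Real.sqrt (π / b') := integral_gaussian b'
      have h4 : π / b' = π * (M*(1+t)) := by rw [hb'def, div_eq_mul_inv, inv_inv]
      rw [h1, h2, h3, h4, abs_of_pos (inv_pos.2 hw0), smul_eq_mul]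
    refine le_trans key ?_
    have hsqrt : Real.sqrt (π * (M*(1+t))) = Real.sqrt (π*M) * Real.sqrt (1+t) := by
      rw [show π * (M*(1+t)) = (π*M) * (1+t) by ring, Real.sqrt_mul (by positivity)]
    have hPs : (1+t)^(-(1:ℝ)/2) * Real.sqrt (1+t) = 1 := by
      rw [Real.sqrt_eq_rpow, ← Real.rpow_add h1t,
        show -(1:ℝ)/2 + 1/2 = 0 by norm_num, Real.rpow_zero]
    have hc₂bound : c₂ * (w⁻¹ * Real.sqrt (π * (M*(1+t))))
        ≤ (2:ℝ)^r * (3:ℝ)^r * Real.sqrt (π*M) * (1 + |x| + Real.sqrt t) ^ (-r) := by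
      have e1 : (2*w/|x|)^r = (2:ℝ)^r * w^r / |x|^r := by
        rw [Real.div_rpow (by positivity) hx0.le, Real.mul_rpow (by norm_num) hw0.le]
      have e2 : w^r * w⁻¹ = w^(r-1) := by
        rw [Real.rpow_sub hw0, Real.rpow_one, div_eq_mul_inv]
      have e3 : w^(r-1) ≤ 1 := Real.rpow_le_one hw0.le hw1.le (by linarith)
      have e4 : |x|^(-r) ≤ (3:ℝ)^r * (1 + |x| + Real.sqrt t) ^ (-r) := by
        have h31 : 1 + |x| + Real.sqrt t ≤ 3*|x| := by linarith
        have h32 : (3*|x|)^(-r) ≤ (1 + |x| + Real.sqrt t) ^ (-r) :=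
          Real.rpow_le_rpow_of_nonpos (by positivity) h31 (by linarith)
        have h33 : (3*|x|)^(-r) = (3:ℝ)^(-r) * |x|^(-r) :=
          Real.mul_rpow (by norm_num) hx0.le
        have h34 : (3:ℝ)^r * (3:ℝ)^(-r) = 1 := by
          rw [← Real.rpow_add (by norm_num : (0:ℝ) < 3)]; norm_num
        calc |x|^(-r) = (3:ℝ)^r * ((3:ℝ)^(-r) * |x|^(-r)) := by
              rw [← mul_assoc, h34, one_mul]
          _ = (3:ℝ)^r * (3*|x|)^(-r) := by rw [h33]
          _ ≤ (3:ℝ)^r * (1 + |x| + Real.sqrt t) ^ (-r) :=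
              mul_le_mul_of_nonneg_left h32 (by positivity)
      have e0 : c₂ * (w⁻¹ * Real.sqrt (π * (M*(1+t))))
          = (2:ℝ)^r * (w^r * w⁻¹) * Real.sqrt (π*M) * (|x|^r)⁻¹ := by
        rw [hc₂def, hsqrt, e1]
        linear_combination ((2:ℝ)^r * w^r * w⁻¹ * Real.sqrt (π*M) * (|x|^r)⁻¹) * hPs
      rw [e0]
      have e5a : (2:ℝ)^r * (w^r * w⁻¹) ≤ (2:ℝ)^r * 1 :=
        mul_le_mul_of_nonneg_left (by rw [e2]; exact e3) (by positivity)
      have e5 : (2:ℝ)^r * (w^r * w⁻¹) * Real.sqrt (π*M) * (|x|^r)⁻¹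
          ≤ (2:ℝ)^r * 1 * Real.sqrt (π*M) * (|x|^r)⁻¹ :=
        mul_le_mul_of_nonneg_right (mul_le_mul_of_nonneg_right e5a (Real.sqrt_nonneg _))
          (by positivity)
      refine e5.trans ?_
      have e6 : (2:ℝ)^r * 1 * Real.sqrt (π*M) * (|x|^r)⁻¹
          = (2:ℝ)^r * Real.sqrt (π*M) * |x|^(-r) := by
        rw [Real.rpow_neg hx0.le]; ring
      rw [e6]
      calc (2:ℝ)^r * Real.sqrt (π*M) * |x|^(-r)
          ≤ (2:ℝ)^r * Real.sqrt (π*M) * ((3:ℝ)^r * (1 + |x| + Real.sqrt t) ^ (-r)) :=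
            mul_le_mul_of_nonneg_left e4 (by positivity)
        _ = (2:ℝ)^r * (3:ℝ)^r * Real.sqrt (π*M) * (1 + |x| + Real.sqrt t) ^ (-r) := by ring
    have hIle : I₀ ≤ (I₀ + 1) * Real.exp M⁻¹ := by nlinarith
    nlinarith [hc₂bound, mul_le_mul_of_nonneg_right hIle hT2, mul_nonneg hK hT2,
      mul_nonneg hK hT1, hT1, hT2,
      mul_nonneg hT1 (mul_nonneg (by linarith : (0:ℝ) ≤ I₀ + 1) (Real.exp_pos M⁻¹).le)]
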